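/- Fix m ≥ 1 and n not divisible by m+1, and write n = (m+1)ν + r with 1 ≤ r ≤ m. The number of pairs (w, j) where w is an m-Łukasiewicz path of length n and j ∈ {1,…,n} is a pointed step, equals the number of pairs (v, a) where v is an m-Dyck prefix of length n with reduced height ĥ(v) = k ≥ 0 and a = (a_0,…,a_k) is a decoration, i.e. 1 ≤ a_i ≤ m for i < k and 1 ≤ a_k ≤ r. In other words, n·L_n = Σ_v r·m^(ĥ(v)) where L_n is the number of m-Łukasiewicz paths of length n and the sum runs over m-Dyck prefixes v of length n. -/

import Mathlib

open scoped Classical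

/-- Height of a path: `true` is an up step (+1), `false` is a down step (-m). -/
def height (m : ℕ) (w : List Bool) : ℤ :=
  (w.count true : ℤ) - (m : ℤ) * (w.count false : ℤ)

/-- An m-Dyck prefix: every prefix (including the whole path) has nonnegative height. -/
def IsDyckPrefix (m : ℕ) (w : List Bool) : Prop :=
  ∀ k ≤ w.length, 0 ≤ height m (w.take k)

/-- An m-Łukasiewicz path: every proper prefix has nonnegative height,
but the full path has negative height. -/
def IsLuka (m : ℕ) (w : List Bool) : Prop :=
  (∀ k < w.length, 0 ≤ height m (w.take k)) ∧ height m w < 0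

/-- Reduced height of a path of length `n = (m+1)ν + r`. -/
def reducedHeight (m r : ℕ) (w : List Bool) : ℕ :=
  ((height m w - (r : ℤ)) / ((m : ℤ) + 1)).toNat


section Aux
open Finset

lemma count_true_add_count_false (w : List Bool) :
    w.count true + w.count false = w.length := by
  induction w with
  | nil => simp
  | cons b t ih => cases b <;> simp [List.count_cons] <;> omega

lemma height_eq_sub (m : ℕ) (w : List Bool) :
    height m w = (w.length : ℤ) - (m + 1) * (w.count false : ℤ) := by
  have h := count_true_add_count_false w
  have h2 : (w.count true : ℤ) = (w.length : ℤ) - (w.count false : ℤ) := by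
    have : ((w.count true + w.count false : ℕ) : ℤ) = (w.length : ℤ) := by rw [h]
    push_cast at this; omega
  unfold height
  rw [h2]; ring

lemma height_append (m : ℕ) (v w : List Bool) :
    height m (v ++ w) = height m v + height m w := by
  unfold height; push_cast [List.count_append]; ring

lemma height_singleton (m : ℕ) (b : Bool) :
    height m [b] = if b then 1 else -(m : ℤ) := by
  cases b <;> simp [height]

lemma dyck_height_nonneg {m : ℕ} {w : List Bool} (h : IsDyckPrefix m w) :
    0 ≤ height m w := by
  have := h w.length le_rfl
  simpa using this

lemma dyck_append_singleton (m : ℕ) (v : List Bool) (b : Bool) :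
    IsDyckPrefix m (v ++ [b]) ↔ IsDyckPrefix m v ∧ 0 ≤ height m v + height m [b] := by
  constructor
  · intro h
    constructor
    · intro k hk
      have hk' : k ≤ (v ++ [b]).length := by simp; omega
      have := h k hk'
      rwa [List.take_append_of_le_length hk] at this
    · have := h (v.length + 1) (by simp)
      rwa [show v.length + 1 = (v ++ [b]).length by simp, List.take_length,
        height_append] at this
  · rintro ⟨h1, h2⟩ k hk
    rcases Nat.lt_or_ge k (v.length + 1) with hlt | hge
    · rw [List.take_append_of_le_length (by omega)]
      exact h1 k (by omega)
    · have hk2 : k = v.length + 1 := by simp at hk; omega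
      rw [hk2, show v.length + 1 = (v ++ [b]).length by simp, List.take_length,
        height_append]
      exact h2

lemma card_last' {N : ℕ} (Q : (Fin (N+1) → Bool) → Prop) (P : (Fin N → Bool) → Prop)
    (b : Bool) [DecidablePred Q] [DecidablePred P]
    (hQ : ∀ f, Q f ↔ (P (fun i => f i.castSucc) ∧ f (Fin.last N) = b)) :
    (Finset.univ.filter Q).card = (Finset.univ.filter P).card := by
  refine Finset.card_bij' (fun f _ => fun i : Fin N => f i.castSucc)
    (fun g _ => Fin.snoc g b) ?_ ?_ ?_ ?_
  · intro f hf
    simp only [Finset.mem_filter, Finset.mem_univ, true_and] at hf ⊢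
    exact ((hQ f).1 hf).1
  · intro g hg
    simp only [Finset.mem_filter, Finset.mem_univ, true_and] at hg ⊢
    rw [hQ]
    refine ⟨?_, by simp⟩
    have h : (fun i : Fin N => (Fin.snoc g b : Fin (N+1) → Bool) i.castSucc) = g := by
      funext i; simp
    rw [h]; exact hg
  · intro f hf
    simp only [Finset.mem_filter, Finset.mem_univ, true_and] at hf
    funext x
    refine Fin.lastCases ?_ (fun i => ?_) x
    · simp [((hQ f).1 hf).2]
    · simp
  · intro g _
    funext i
    simp

noncomputable def Dck (m n h : ℕ) : ℕ :=
  (Finset.univ.filter (fun f : Fin n → Bool =>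
    IsDyckPrefix m (List.ofFn f) ∧ height m (List.ofFn f) = (h : ℤ))).card

lemma ofFn_split {n : ℕ} (f : Fin (n+1) → Bool) :
    List.ofFn f = List.ofFn (fun i => f i.castSucc) ++ [f (Fin.last n)] := by
  rw [List.ofFn_succ']; simp [List.concat_eq_append]

lemma step_iff_true (m : ℕ) (v : List Bool) (t : ℤ) :
    (IsDyckPrefix m (v ++ [true]) ∧ height m (v ++ [true]) = t) ↔
      (IsDyckPrefix m v ∧ height m v = t - 1 ∧ 0 ≤ t) := by
  rw [height_append, height_singleton, dyck_append_singleton, height_singleton]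
  norm_num
  constructor
  · rintro ⟨⟨h1, h2⟩, h3⟩; exact ⟨h1, by omega, by omega⟩
  · rintro ⟨h1, h2, h3⟩; exact ⟨⟨h1, by omega⟩, by omega⟩

lemma step_iff_false (m : ℕ) (v : List Bool) (t : ℤ) :
    (IsDyckPrefix m (v ++ [false]) ∧ height m (v ++ [false]) = t) ↔
      (IsDyckPrefix m v ∧ height m v = t + m ∧ 0 ≤ t) := by
  rw [height_append, height_singleton, dyck_append_singleton, height_singleton]
  norm_num
  constructor
  · rintro ⟨⟨h1, h2⟩, h3⟩; exact ⟨h1, by omega, by omega⟩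
  · rintro ⟨h1, h2, h3⟩; exact ⟨⟨h1, by omega⟩, by omega⟩

lemma Dck_card_split (m n h : ℕ) :
    Dck m (n+1) h
      = (Finset.univ.filter (fun f : Fin (n+1) → Bool =>
          (IsDyckPrefix m (List.ofFn f) ∧ height m (List.ofFn f) = (h : ℤ))
            ∧ f (Fin.last n) = true)).card
        + (Finset.univ.filter (fun f : Fin (n+1) → Bool =>
          (IsDyckPrefix m (List.ofFn f) ∧ height m (List.ofFn f) = (h : ℤ))
            ∧ f (Fin.last n) = false)).card := by
  unfold Dck
  rw [← Finset.card_filter_add_card_filter_not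
    (p := fun f : Fin (n+1) → Bool => f (Fin.last n) = true)]
  rw [Finset.filter_filter, Finset.filter_filter]
  congr 1
  apply congrArg
  apply Finset.filter_congr
  intro f _
  simp [Bool.not_eq_true]

lemma Dck_succ (m n h : ℕ) :
    Dck m (n+1) (h+1) = Dck m n h + Dck m n (h+1+m) := by
  rw [Dck_card_split]
  unfold Dck
  congr 1
  · apply card_last' _ _ true
    intro f
    constructor
    · rintro ⟨hq, hl⟩
      rw [ofFn_split f, hl, step_iff_true] at hq
      refine ⟨⟨hq.1, ?_⟩, hl⟩
      have := hq.2.1; push_cast at this ⊢; omega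
    · rintro ⟨hp, hl⟩
      refine ⟨?_, hl⟩
      rw [ofFn_split f, hl, step_iff_true]
      refine ⟨hp.1, ?_, by positivity⟩
      have := hp.2; push_cast at this ⊢; omega
  · apply card_last' _ _ false
    intro f
    constructor
    · rintro ⟨hq, hl⟩
      rw [ofFn_split f, hl, step_iff_false] at hq
      refine ⟨⟨hq.1, ?_⟩, hl⟩
      have := hq.2.1; push_cast at this ⊢; omega
    · rintro ⟨hp, hl⟩
      refine ⟨?_, hl⟩
      rw [ofFn_split f, hl, step_iff_false]
      refine ⟨hp.1, ?_, by positivity⟩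
      have := hp.2; push_cast at this ⊢; omega

lemma Dck_succ_zero (m n : ℕ) :
    Dck m (n+1) 0 = Dck m n m := by
  rw [Dck_card_split]
  unfold Dck
  have h0 : (Finset.univ.filter (fun f : Fin (n+1) → Bool =>
      (IsDyckPrefix m (List.ofFn f) ∧ height m (List.ofFn f) = ((0:ℕ) : ℤ))
        ∧ f (Fin.last n) = true)).card = 0 := by
    rw [Finset.card_eq_zero, Finset.filter_eq_empty_iff]
    rintro f _ ⟨hq, hl⟩
    rw [ofFn_split f, hl, step_iff_true] at hq
    have h1 := dyck_height_nonneg hq.1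
    have h2 := hq.2.1
    push_cast at h2
    omega
  rw [h0, Nat.zero_add]
  apply card_last' _ _ false
  intro f
  constructor
  · rintro ⟨hq, hl⟩
    rw [ofFn_split f, hl, step_iff_false] at hq
    refine ⟨⟨hq.1, ?_⟩, hl⟩
    have h3 := hq.2.1
    push_cast at h3 ⊢
    linarith
  · rintro ⟨hp, hl⟩
    refine ⟨?_, hl⟩
    rw [ofFn_split f, hl, step_iff_false]
    refine ⟨hp.1, ?_, le_rfl⟩
    have h4 := hp.2
    push_cast at h4 ⊢
    linarith

lemma Dck_zero (m : ℕ) : Dck m 0 0 = 1 := by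
  unfold Dck
  rw [Finset.filter_true_of_mem, Finset.card_univ]
  · simp
  · intro f _
    constructor
    · intro k hk
      simp at hk
      subst hk
      simp [height, IsDyckPrefix]
    · simp [height]

lemma Dck_eq_zero_of_lt (m n h : ℕ) (hl : n < h) : Dck m n h = 0 := by
  unfold Dck
  rw [Finset.card_eq_zero, Finset.filter_eq_empty_iff]
  rintro f _ ⟨_, hh⟩
  have h1 : height m (List.ofFn f) ≤ ((List.ofFn f).count true : ℤ) := by
    unfold height
    have : (0:ℤ) ≤ (m : ℤ) * ((List.ofFn f).count false : ℤ) := by positivity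
    omega
  have h2 : (List.ofFn f).count true ≤ (List.ofFn f).length :=
    List.count_le_length
  rw [hh] at h1
  simp only [List.length_ofFn] at h2
  have : (h : ℤ) ≤ (n : ℤ) := le_trans h1 (by exact_mod_cast h2)
  omega

lemma binB (m e g n : ℕ) (hn : n = (m+1)*(e+1) + g) :
    (n+2) * ((g+1) * (n+1).choose (e+1) + (g+1+m+1) * (n+1).choose e)
      = (n+1) * ((g+2) * (n+2).choose (e+1)) := by
  have h1 := Nat.choose_succ_right_eq (n+1) e
  have h3 : n+1-e = m*e+m+g+2 := by
    have hx : n = m*e+m+e+g+1 := by rw [hn]; ring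
    omega
  rw [h3] at h1
  have h2 : (n+2).choose (e+1) = (n+1).choose e + (n+1).choose (e+1) :=
    Nat.choose_succ_succ' (n+1) e
  rw [h2]
  have hx : n = m*e+m+e+g+1 := by rw [hn]; ring
  subst hx
  zify at h1 ⊢
  linear_combination (-(m:ℤ)-1) * h1

lemma CF (m : ℕ) : ∀ n d h : ℕ, n = (m+1)*d + h →
    (n+1) * Dck m n h = (h+1) * Nat.choose (n+1) d := by
  intro n
  induction n with
  | zero =>
    intro d h hn
    have h0 : h = 0 := Nat.eq_zero_of_add_eq_zero_left hn.symm
    have hmd : (m+1)*d = 0 := Nat.eq_zero_of_add_eq_zero_right hn.symm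
    have hd : d = 0 := by
      rcases Nat.mul_eq_zero.mp hmd with h' | h'
      · omega
      · exact h'
    subst h0; subst hd
    simp [Dck_zero]
  | succ n IH =>
    intro d h hn
    match h with
    | 0 =>
      rcases d with _ | e
      · simp at hn
      · have hn' : n = (m+1)*e + m := by
          have : (m+1)*(e+1) = (m+1)*e + m + 1 := by ring
          omega
        have I := IH e m hn'
        rw [Dck_succ_zero]
        apply Nat.eq_of_mul_eq_mul_left (show 0 < n+1 by omega)
        calc (n+1) * ((n+1+1) * Dck m n m)
            = (n+2) * ((n+1) * Dck m n m) := by ring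
          _ = (n+2) * ((m+1) * (n+1).choose e) := by rw [I]
          _ = (m+1) * ((n+2) * (n+1).choose e) := by ring
          _ = (m+1) * ((n+2).choose (e+1) * (e+1)) := by
              rw [Nat.add_one_mul_choose_eq (n+1) e]
          _ = ((m+1)*(e+1)) * (n+2).choose (e+1) := by ring
          _ = (n+1) * ((0+1) * (n+1+1).choose (e+1)) := by
              have : (m+1)*(e+1) = n+1 := by omega
              rw [this]; ring
    | g+1 =>
      rcases d with _ | e
      · have hg : g = n := by omega
        subst hg
        rw [Dck_succ, Dck_eq_zero_of_lt m g (g+1+m) (by omega)]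
        have I := IH 0 g (by simpa using rfl)
        have hgg : Dck m g g = 1 := by
          have := I
          simp at this
          exact Nat.eq_of_mul_eq_mul_left (show 0 < g+1 by omega) (by simpa using this)
        simp [hgg]
      · have hn' : n = (m+1)*(e+1) + g := by
          have : (m+1)*(e+1) + (g+1) = (m+1)*(e+1) + g + 1 := by ring
          omega
        have I1 := IH (e+1) g hn'
        have I2 := IH e (g+1+m) (by rw [hn']; ring)
        rw [Dck_succ]
        apply Nat.eq_of_mul_eq_mul_left (show 0 < n+1 by omega)
        calc (n+1) * ((n+1+1) * (Dck m n g + Dck m n (g+1+m)))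
            = (n+2) * ((n+1) * Dck m n g + (n+1) * Dck m n (g+1+m)) := by ring
          _ = (n+2) * ((g+1) * (n+1).choose (e+1) + (g+1+m+1) * (n+1).choose e) := by
              rw [I1, I2]
          _ = (n+1) * ((g+2) * (n+2).choose (e+1)) := binB m e g n hn'
          _ = (n+1) * ((g+1+1) * (n+1+1).choose (e+1)) := by norm_num

lemma tel (m : ℕ) : ∀ (ν s : ℕ),
    ∑ k ∈ Finset.range (ν+1),
        m^k * (((m+1)*k + s + 1) * ((m+1)*ν + s + 1).choose (ν - k))
      = ((m+1)*ν + s + 1) * ((m+1)*ν + s).choose ν := by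
  intro ν
  induction ν with
  | zero => intro s; simp
  | succ ν IH =>
    intro s
    rw [Finset.sum_range_succ']
    have key : ∀ i, m^(i+1) * (((m+1)*(i+1) + s + 1) * ((m+1)*(ν+1) + s + 1).choose (ν+1-(i+1)))
        = m * (m^i * (((m+1)*i + (s+m+1) + 1) * ((m+1)*ν + (s+m+1) + 1).choose (ν-i))) := by
      intro i
      have e1 : (m+1)*(i+1)+s+1 = (m+1)*i+(s+m+1)+1 := by ring
      have e2 : (m+1)*(ν+1)+s+1 = (m+1)*ν+(s+m+1)+1 := by ring
      have e3 : ν+1-(i+1) = ν-i := by omega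
      rw [e1, e2, e3, pow_succ]; ring
    rw [Finset.sum_congr rfl (fun i _ => key i), ← Finset.mul_sum, IH (s+m+1)]
    -- remaining goal in terms of U := (m+1)*(ν+1)+s
    have hU1 : (m+1)*ν+(s+m+1) = (m+1)*(ν+1)+s := by ring
    rw [hU1]
    simp only [pow_zero, one_mul, Nat.mul_zero, Nat.zero_add, Nat.sub_zero]
    have h1 := Nat.choose_succ_right_eq ((m+1)*(ν+1)+s) ν
    have hUν : (m+1)*(ν+1)+s - ν = m*ν+m+s+1 := by
      have hx : (m+1)*(ν+1)+s = m*ν+m+ν+s+1 := by ring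
      omega
    rw [hUν] at h1
    have h2 : ((m+1)*(ν+1)+s+1).choose (ν+1)
        = ((m+1)*(ν+1)+s).choose ν + ((m+1)*(ν+1)+s).choose (ν+1) :=
      Nat.choose_succ_succ' _ ν
    rw [h2]
    zify at h1 ⊢
    linear_combination (-(m:ℤ)-1) * h1

lemma take_append_left {v : List Bool} {b : Bool} {k : ℕ} (hk : k ≤ v.length) :
    (v ++ [b]).take k = v.take k :=
  List.take_append_of_le_length hk

lemma luka_eq_Dck (m N ν s : ℕ) (hm : 1 ≤ m) (hs : s + 1 ≤ m)
    (hN : N + 1 = (m+1)*ν + (s+1)) :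
    Nat.card {f : Fin (N+1) → Bool // IsLuka m (List.ofFn f)} = Dck m N s := by
  rw [Nat.card_eq_fintype_card, Fintype.card_subtype]
  unfold Dck
  apply card_last' _ _ false
  intro f
  have hlenv : (List.ofFn (fun i : Fin N => f i.castSucc)).length = N := by
    simp
  have hlenw : (List.ofFn f).length = N + 1 := by simp
  constructor
  · rintro ⟨hprop, hneg⟩
    have hDv : IsDyckPrefix m (List.ofFn (fun i : Fin N => f i.castSucc)) := by
      intro k hk
      have h1 := hprop k (by omega)
      rwa [ofFn_split f, take_append_left (by omega)] at h1
    have hv0 : 0 ≤ height m (List.ofFn (fun i : Fin N => f i.castSucc)) :=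
      dyck_height_nonneg hDv
    have hb : f (Fin.last N) = false := by
      by_contra hb
      rw [Bool.not_eq_false] at hb
      rw [ofFn_split f, height_append, height_singleton, hb] at hneg
      simp at hneg
      omega
    refine ⟨⟨hDv, ?_⟩, hb⟩
    -- height v = s
    have hw : height m (List.ofFn f)
        = height m (List.ofFn (fun i : Fin N => f i.castSucc)) - m := by
      rw [ofFn_split f, height_append, height_singleton, hb]
      simp only [if_neg Bool.false_ne_true]
      ring
    set hv := height m (List.ofFn (fun i : Fin N => f i.castSucc)) with hhv
    have hlt : hv < m := by rw [hw] at hneg; omega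
    have hc := height_eq_sub m (List.ofFn (fun i : Fin N => f i.castSucc))
    rw [← hhv, hlenv] at hc
    set c := ((List.ofFn (fun i : Fin N => f i.castSucc)).count false : ℤ) with hcc
    have hdvd : ((m:ℤ)+1) ∣ (hv - s) := by
      refine ⟨(ν : ℤ) - c, ?_⟩
      have hNc : ((N:ℤ)) = (m+1)*ν + s := by exact_mod_cast by omega
      rw [hc, hNc]; ring
    have : hv - s = 0 := by
      apply Int.eq_zero_of_abs_lt_dvd hdvd
      rw [abs_lt]
      constructor <;> [skip; skip] <;> push_cast <;> omega
    omega
  · rintro ⟨⟨hDv, hhv⟩, hb⟩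
    constructor
    · intro k hk
      rw [ofFn_split f, take_append_left (by omega)]
      exact hDv k (by omega)
    · rw [ofFn_split f, height_append, height_singleton, hb]
      simp only [if_neg Bool.false_ne_true]
      rw [hhv]
      push_cast
      omega

lemma dyck_height_struct (m n ν r : ℕ) (hr : 1 ≤ r) (hrm : r ≤ m)
    (hdiv : n = (m + 1) * ν + r) (f : Fin n → Bool)
    (hP : IsDyckPrefix m (List.ofFn f)) :
    ∃ k₀, k₀ < ν + 1 ∧ height m (List.ofFn f) = (((m+1)*k₀ + r : ℕ) : ℤ)
      ∧ reducedHeight m r (List.ofFn f) = k₀ := by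
  set c : ℕ := (List.ofFn f).count false with hc
  have hh : height m (List.ofFn f) = (n : ℤ) - (m + 1) * (c : ℤ) := by
    rw [height_eq_sub]; simp [hc]
  have h0 : 0 ≤ height m (List.ofFn f) := dyck_height_nonneg hP
  have hcn : (m+1) * c ≤ n := by
    rw [hh] at h0
    have : ((m+1) * c : ℕ) ≤ (n : ℤ) := by push_cast; omega
    exact_mod_cast this
  have hcν : c < ν + 1 := by
    have h1 : (m+1)*(ν+1) = (m+1)*ν + (m+1) := by ring
    have h2 : (m+1) * c < (m+1)*(ν+1) := by omega
    exact Nat.lt_of_mul_lt_mul_left h2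
  refine ⟨ν - c, by omega, ?_, ?_⟩
  · have hkey : ((m+1)*(ν-c) + r : ℕ) = n - (m+1)*c := by
      have h3 : (m+1)*(ν-c) + (m+1)*c = (m+1)*ν := by
        rw [← Nat.mul_add, Nat.sub_add_cancel (by omega)]
      omega
    rw [hh, hkey]
    push_cast [hcn]
    ring
  · unfold reducedHeight
    have hkey : ((m+1)*(ν-c) + r : ℕ) = n - (m+1)*c := by
      have h3 : (m+1)*(ν-c) + (m+1)*c = (m+1)*ν := by
        rw [← Nat.mul_add, Nat.sub_add_cancel (by omega)]
      omega
    have hhh : height m (List.ofFn f) - (r:ℤ) = ((m:ℤ)+1) * ((ν - c : ℕ) : ℤ) := by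
      rw [hh]
      have : (((m+1)*(ν-c) + r : ℕ) : ℤ) = (n:ℤ) - (m+1)*(c:ℤ) := by
        rw [hkey]; push_cast [hcn]; ring
      push_cast at this ⊢
      linarith
    rw [hhh, Int.mul_ediv_cancel_left _ (by positivity), Int.toNat_natCast]


end Aux

open Finset in
theorem stmt5 (m n ν r : ℕ) (hm : 1 ≤ m) (hr : 1 ≤ r) (hrm : r ≤ m)
    (hdiv : n = (m + 1) * ν + r) :
    n * Nat.card {f : Fin n → Bool // IsLuka m (List.ofFn f)}
      = ∑ f : Fin n → Bool,
          if IsDyckPrefix m (List.ofFn f) then r * m ^ reducedHeight m r (List.ofFn f)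
          else 0 := by

  -- rewrite RHS as a sum over reduced heights
  have rhs_eq : (∑ f : Fin n → Bool,
      if IsDyckPrefix m (List.ofFn f) then r * m ^ reducedHeight m r (List.ofFn f) else 0)
      = ∑ k ∈ Finset.range (ν+1), r * m^k * Dck m n ((m+1)*k + r) := by
    have step1 : ∀ f : Fin n → Bool,
        (if IsDyckPrefix m (List.ofFn f) then r * m ^ reducedHeight m r (List.ofFn f) else 0)
        = ∑ k ∈ Finset.range (ν+1),
            (if IsDyckPrefix m (List.ofFn f)
                ∧ height m (List.ofFn f) = (((m+1)*k + r : ℕ) : ℤ)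
             then r * m^k else 0) := by
      intro f
      by_cases hP : IsDyckPrefix m (List.ofFn f)
      · obtain ⟨k₀, hk₀, hht, hred⟩ := dyck_height_struct m n ν r hr hrm hdiv f hP
        rw [Finset.sum_eq_single_of_mem k₀ (Finset.mem_range.mpr hk₀)]
        · rw [if_pos hP, if_pos ⟨hP, hht⟩, hred]
        · intro k _ hkne
          rw [if_neg]
          rintro ⟨-, hht'⟩
          apply hkne
          rw [hht] at hht'
          have : ((m+1)*k + r : ℕ) = ((m+1)*k₀ + r : ℕ) := by exact_mod_cast hht'.symm
          have h2 : (m+1)*k = (m+1)*k₀ := by omega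
          exact Nat.eq_of_mul_eq_mul_left (by omega) h2
      · simp [hP]
    rw [Finset.sum_congr rfl (fun f _ => step1 f), Finset.sum_comm]
    apply Finset.sum_congr rfl
    intro k _
    rw [← Finset.sum_filter, Finset.sum_const, smul_eq_mul]
    rw [Nat.mul_comm]
    rfl
  rw [rhs_eq]
  -- handle LHS
  obtain ⟨N, rfl⟩ : ∃ N, n = N + 1 := ⟨n - 1, by omega⟩
  obtain ⟨s, rfl⟩ : ∃ s, r = s + 1 := ⟨r - 1, by omega⟩
  rw [luka_eq_Dck m N ν s hm (by omega) hdiv]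
  have hNs : N = (m+1)*ν + s := by
    have : N + 1 = ((m+1)*ν + s) + 1 := by rw [hdiv]; omega
    omega
  have lhs_eq : (N + 1) * Dck m N s = (s+1) * Nat.choose (N+1) ν :=
    CF m N ν s hNs
  rw [lhs_eq]
  -- multiply both sides by (N+2) and use CF + telescoping
  apply Nat.eq_of_mul_eq_mul_left (show 0 < N + 2 by omega)
  have hterm : ∀ k ∈ Finset.range (ν+1),
      (N+2) * ((s+1) * m^k * Dck m (N+1) ((m+1)*k + (s+1)))
      = (s+1) * (m^k * ((((m+1)*k + (s+1) + 1)) * Nat.choose (N+2) (ν - k))) := by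
    intro k hk
    rw [Finset.mem_range] at hk
    have hdecomp : N + 1 = (m+1)*(ν-k) + ((m+1)*k + (s+1)) := by
      have h3 : (m+1)*(ν-k) + (m+1)*k = (m+1)*ν := by
        rw [← Nat.mul_add, Nat.sub_add_cancel (by omega)]
      omega
    have := CF m (N+1) (ν-k) ((m+1)*k + (s+1)) hdecomp
    calc (N+2) * ((s+1) * m^k * Dck m (N+1) ((m+1)*k + (s+1)))
        = ((s+1) * m^k) * ((N+1+1) * Dck m (N+1) ((m+1)*k + (s+1))) := by ring
      _ = ((s+1) * m^k) * (((m+1)*k + (s+1) + 1) * Nat.choose (N+1+1) (ν-k)) := by rw [this]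
      _ = (s+1) * (m^k * (((m+1)*k + (s+1) + 1) * Nat.choose (N+2) (ν-k))) := by ring
  rw [Finset.mul_sum, Finset.sum_congr rfl hterm, ← Finset.mul_sum]
  have htel := tel m ν (s+1)
  have hN2 : (m+1)*ν + (s+1) + 1 = N + 2 := by omega
  have hN1 : (m+1)*ν + (s+1) = N + 1 := by omega
  rw [hN2, hN1] at htel
  rw [htel]
  ring
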